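/- Let n ≥ 1, ν a partition of length at most n, and T ∈ SST_{2n}(ν). Then suc(T) = T if and only if T is symplectic, i.e., T(k,1) ≥ 2k−1 for all k ∈ [1,ℓ(ν)]. -/

import Mathlib

/-- `part lam i` : the `i`-th part (1-indexed) of the partition `lam`,
with `lam_i = 0` for `i > ℓ(lam)`. -/
def part (lam : List ℕ) (i : ℕ) : ℕ := lam.getD (i - 1) 0

/-- A partition: a weakly decreasing finite sequence of positive integers. -/
def IsPartition (lam : List ℕ) : Prop :=
  lam.Pairwise (· ≥ ·) ∧ ∀ x ∈ lam, 0 < x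

/-- `remAux` computes the set of removable entries of a strictly increasing
sequence, given as a list in *reversed* order (so the head is the last entry). -/
def remAux : List ℕ → Finset ℕ
  | [] => ∅
  | [_] => ∅
  | b :: a :: rest =>
    if Even b ∧ a + 1 = b ∧ b + (remAux rest).card + 1 < 2 * (rest.length + 2) then
      insert a (insert b (remAux rest))
    else remAux (a :: rest)

/-- `remSet 𝐚` : the set `Rem(𝐚)` of removable entries of the strictly
increasing sequence `𝐚 = (a_1, …, a_l)` (given in its natural order). -/
def remSet (l : List ℕ) : Finset ℕ := remAux l.reverse

/-- `redSeq 𝐚` : the reduction `red(𝐚)`, i.e. `𝐚` with the removable entries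
removed. -/
def redSeq (l : List ℕ) : List ℕ := l.filter (fun x => decide (x ∉ remSet l))

/-!  We represent a semistandard tableau by its list of columns (left to
right), each column being the list of its entries read from top to bottom. -/

/-- Column insertion `w → T` of `w` into the tableau `T` (given as a list of
columns): `w` is inserted into the first column, bumping the smallest entry
`≥ w` into the next column, and so on; the last bumped entry is placed at the
bottom of the first column that accommodates it. -/
def colInsert (w : ℕ) : List (List ℕ) → List (List ℕ)
  | [] => [[w]]
  | c :: rest =>
    match c.dropWhile (fun y => decide (y < w)) with
    | [] => (c ++ [w]) :: rest
    | x :: c₂ => (c.takeWhile (fun y => decide (y < w)) ++ w :: c₂) :: colInsert x rest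

/-- Insert the entries of the column `b = (b_1, …, b_k)` (top to bottom)
successively into `T`; this is the plactic product `b * T`. -/
def insertCol (b : List ℕ) (T : List (List ℕ)) : List (List ℕ) :=
  b.foldl (fun t w => colInsert w t) T

/-- The successor map: `suc T = red(𝐚) * T'`, where `𝐚` is the first column
of `T` and `T'` consists of the remaining columns. -/
def suc : List (List ℕ) → List (List ℕ)
  | [] => []
  | c :: rest => insertCol (redSeq c) rest

/-- `rowLen T i` : the length `λ_i` of the `i`-th row of the tableau `T`,
i.e. the number of columns of length `≥ i`. -/
def rowLen (T : List (List ℕ)) (i : ℕ) : ℕ :=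
  T.countP (fun c => decide (i ≤ c.length))

/-- Validity of the column representation of a semistandard tableau with
entries in `[1, m]`: columns are nonempty and strictly increasing (top to
bottom) with entries in `[1, m]`, column lengths weakly decrease from left to
right, and rows weakly increase from left to right. -/
def IsTableau (m : ℕ) (T : List (List ℕ)) : Prop :=
  (∀ c ∈ T, c ≠ []) ∧
  (∀ c ∈ T, c.Chain' (· < ·)) ∧
  (∀ c ∈ T, ∀ x ∈ c, 1 ≤ x ∧ x ≤ m) ∧
  T.Chain' (fun c c' => c'.length ≤ c.length ∧
    ∀ r < c'.length, c.getD r 0 ≤ c'.getD r 0)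

/-- `T` has shape `lam`. -/
def hasShape (T : List (List ℕ)) (lam : List ℕ) : Prop :=
  ∀ i, 1 ≤ i → rowLen T i = part lam i

/-- `T` is symplectic: the entry in the `k`-th row of the first column is
at least `2k - 1`. -/
def IsSymplectic (T : List (List ℕ)) : Prop :=
  ∀ k, 1 ≤ k → k ≤ (T.headD []).length → 2 * k - 1 ≤ (T.headD []).getD (k - 1) 0


lemma mem_of_mem_remAux : ∀ (r : List ℕ), ∀ x ∈ remAux r, x ∈ r := by
  intro r
  induction r using remAux.induct with
  | case1 => simp [remAux]
  | case2 a => simp [remAux]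
  | case3 b a rest h ih =>
      intro x hx
      rw [remAux, if_pos h] at hx
      simp only [Finset.mem_insert] at hx
      rcases hx with rfl | rfl | hx
      · simp
      · simp
      · simp [ih x hx]
  | case4 b a rest h _ ih2 =>
      intro x hx
      rw [remAux, if_neg h] at hx
      have := ih2 x hx
      simp at this ⊢
      tauto

lemma remAux_tail_empty {a : ℕ} {rest : List ℕ} (h : remAux (a :: rest) = ∅) :
    remAux rest = ∅ := by
  cases rest with
  | nil => rfl
  | cons b r =>
      rw [remAux] at h
      split at h
      · exact absurd h (by simp)
      · exact h

lemma remAux_empty_of_big : ∀ (r : List ℕ),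
    (∀ j < r.length, 2 * (r.length - j) - 1 ≤ r.getD j 0) → remAux r = ∅ := by
  intro r
  induction r using remAux.induct with
  | case1 => intro _; rfl
  | case2 a => intro _; rfl
  | case3 b a rest h ih =>
      intro hb
      exfalso
      have h0 := hb 0 (by simp)
      simp only [List.length_cons, List.getD] at h0
      simp at h0
      omega
  | case4 b a rest h _ ih2 =>
      intro hb
      rw [remAux, if_neg h]
      apply ih2
      intro j hj
      have := hb (j+1) (by simpa using Nat.succ_lt_succ hj)
      simpa using this

lemma big_of_remAux_empty : ∀ (r : List ℕ), r.Chain' (· > ·) → (∀ x ∈ r, 1 ≤ x) →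
    remAux r = ∅ → ∀ j < r.length, 2 * (r.length - j) - 1 ≤ r.getD j 0 := by
  intro r
  induction r using remAux.induct with
  | case1 => intro _ _ _ j hj; simp at hj
  | case2 a =>
      intro _ h1 _ j hj
      have hj0 : j = 0 := by simpa using hj
      subst hj0
      simpa using h1 a (by simp)
  | case3 b a rest h ih =>
      intro _ _ hemp
      exfalso
      rw [remAux, if_pos h] at hemp
      simp at hemp
  | case4 b a rest h _ ih2 =>
      intro hch h1 hemp j hj
      rw [remAux, if_neg h] at hemp
      have hrest : remAux rest = ∅ := remAux_tail_empty hemp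
      have hprev := ih2 (hch.tail) (fun x hx => h1 x (List.mem_cons_of_mem _ hx)) hemp
      match j with
      | 0 =>
          have ha := hprev 0 (by simp)
          simp only [List.getD] at ha ⊢
          simp only [List.length_cons] at ha ⊢
          simp at ha ⊢
          by_contra hb
          push_neg at hb
          have hab : a < b := by
            exact (List.isChain_cons_cons.mp hch).1
          have hcard : (remAux rest).card = 0 := by rw [hrest]; simp
          have heb : Even b := by
            rw [Nat.even_iff]; omega
          exact h ⟨heb, by omega, by omega⟩
      | (j+1) =>
          have := hprev j (by simpa using Nat.succ_lt_succ_iff.mp hj)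
          simp only [List.getD] at this ⊢
          simp only [List.length_cons] at this ⊢
          simpa using this

lemma insertCol_cons (w : ℕ) (b : List ℕ) (T : List (List ℕ)) :
    insertCol (w :: b) T = insertCol b (colInsert w T) := rfl

def tsize (T : List (List ℕ)) : ℕ := (T.map List.length).sum

lemma tsize_colInsert : ∀ (T : List (List ℕ)) (w : ℕ), tsize (colInsert w T) = tsize T + 1 := by
  intro T
  induction T with
  | nil => intro w; rfl
  | cons c rest ih =>
      intro w
      rw [colInsert]
      cases h : c.dropWhile (fun y => decide (y < w)) with
      | nil => simp [tsize]; omega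
      | cons x c₂ =>
          have hlen : (c.takeWhile (fun y => decide (y < w))).length + (x :: c₂).length
              = c.length := by
            rw [← h, ← List.length_append, List.takeWhile_append_dropWhile]
          simp only [tsize, List.map_cons, List.sum_cons] at *
          rw [ih x]
          simp only [List.length_append, List.length_cons] at *
          omega

lemma tsize_insertCol : ∀ (b : List ℕ) (T : List (List ℕ)),
    tsize (insertCol b T) = tsize T + b.length := by
  intro b
  induction b with
  | nil => intro T; rfl
  | cons w b ih =>
      intro T
      rw [insertCol_cons, ih, tsize_colInsert]
      simp; omega

lemma insertCol_key : ∀ (b : List ℕ), b.Chain' (· < ·) →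
    ∀ (c p : List ℕ) (R : List (List ℕ)),
    c.length ≤ b.length →
    (∀ i, i < c.length → b.getD i 0 ≤ c.getD i 0) →
    (∀ x ∈ p, ∀ y ∈ b, x < y) →
    insertCol b ((p ++ c) :: R) = (p ++ b) :: insertCol c R := by
  intro b
  induction b with
  | nil =>
      intro _ c p R hlen _ _
      have : c = [] := List.length_eq_zero_iff.mp (Nat.le_zero.mp hlen)
      subst this
      simp [insertCol]
  | cons w bt ih =>
      intro hchain c p R hlen hidx hp
      have hpw : ∀ x ∈ p, (fun y => decide (y < w)) x = true := by
        intro x hx; simpa using hp x hx w (by simp)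
      cases c with
      | nil =>
          have hstep : colInsert w (p :: R) = (p ++ [w]) :: R := by
            rw [colInsert]
            have : p.dropWhile (fun y => decide (y < w)) = [] :=
              List.dropWhile_eq_nil_iff.mpr hpw
            rw [this]
          rw [show (p ++ ([] : List ℕ)) = p by simp, insertCol_cons, hstep]
          have := ih hchain.tail [] (p ++ [w]) R (by simp) (by simp)
            (by
              intro x hx y hy
              simp only [List.mem_append, List.mem_singleton] at hx
              rcases hx with hx | rfl
              · exact hp x hx y (List.mem_cons_of_mem _ hy)
              · exact (List.pairwise_cons.mp (List.isChain_iff_pairwise.mp hchain)).1 y hy)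
          simpa using this
      | cons x ct =>
          have hwx : ¬ (x < w) := by
            have := hidx 0 (by simp)
            simp only [List.getD] at this
            simp at this
            omega
          have hdrop : (p ++ x :: ct).dropWhile (fun y => decide (y < w)) = x :: ct := by
            rw [List.dropWhile_append]
            have h1 : p.dropWhile (fun y => decide (y < w)) = [] :=
              List.dropWhile_eq_nil_iff.mpr hpw
            rw [h1]
            simp [List.dropWhile_cons, hwx]
          have htake : (p ++ x :: ct).takeWhile (fun y => decide (y < w)) = p := by
            have h1 : p.takeWhile (fun y => decide (y < w)) = p :=
              List.takeWhile_eq_self_iff.mpr hpw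
            rw [List.takeWhile_append, if_pos (by rw [h1])]
            have : (x :: ct).takeWhile (fun y => decide (y < w)) = [] := by
              simp [List.takeWhile_cons, hwx]
            rw [this, List.append_nil]
          have hstep : colInsert w ((p ++ x :: ct) :: R)
              = ((p ++ [w]) ++ ct) :: colInsert x R := by
            rw [colInsert, hdrop, htake]
            simp
          rw [insertCol_cons, hstep]
          have := ih hchain.tail ct (p ++ [w]) (colInsert x R)
            (by simpa using Nat.succ_le_succ_iff.mp (by simpa using hlen))
            (by
              intro i hi
              have := hidx (i+1) (by simpa using Nat.succ_lt_succ hi)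
              simpa using this)
            (by
              intro z hz y hy
              simp only [List.mem_append, List.mem_singleton] at hz
              rcases hz with hz | rfl
              · exact hp z hz y (List.mem_cons_of_mem _ hy)
              · exact (List.pairwise_cons.mp (List.isChain_iff_pairwise.mp hchain)).1 y hy)
          rw [this]
          simp [insertCol_cons]

lemma getD_reverse' {c : List ℕ} {j : ℕ} (h : j < c.length) :
    c.reverse.getD j 0 = c.getD (c.length - 1 - j) 0 := by
  rw [List.getD_eq_getElem _ _ (by simpa using h), List.getElem_reverse,
      List.getD_eq_getElem _ _ (by omega)]

lemma insertCol_self : ∀ (rest : List (List ℕ)) (c : List ℕ), c ≠ [] → c.Chain' (· < ·) →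
    (∀ c' ∈ rest, c' ≠ []) → (∀ c' ∈ rest, c'.Chain' (· < ·)) →
    (c :: rest).Chain' (fun c c' => c'.length ≤ c.length ∧
      ∀ r < c'.length, c.getD r 0 ≤ c'.getD r 0) →
    insertCol c rest = c :: rest := by
  intro rest
  induction rest with
  | nil =>
      intro c hne hch _ _ _
      cases c with
      | nil => exact absurd rfl hne
      | cons w ct =>
          rw [insertCol_cons]
          have h0 : colInsert w [] = [[w]] := rfl
          rw [h0]
          have := insertCol_key ct hch.tail [] [w] [] (by simp) (by simp)
            (by intro x hx y hy
                simp only [List.mem_singleton] at hx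
                subst hx
                exact (List.pairwise_cons.mp (List.isChain_iff_pairwise.mp hch)).1 y hy)
          simpa [show insertCol [] ([] : List (List ℕ)) = [] from rfl] using this
  | cons c' rest' ih =>
      intro c hne hch hne' hch' hchain
      have hcc' := List.isChain_cons_cons.mp hchain
      have := insertCol_key c hch c' [] rest' hcc'.1.1 hcc'.1.2 (by simp)
      simp only [List.nil_append] at this
      rw [this, ih c' (hne' c' (by simp)) (hch' c' (by simp))
        (fun x hx => hne' x (List.mem_cons_of_mem _ hx))
        (fun x hx => hch' x (List.mem_cons_of_mem _ hx)) hcc'.2]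

theorem stmt19 (n : ℕ) (hn : 1 ≤ n) (nu : List ℕ)
    (hnu : IsPartition nu) (hlen : nu.length ≤ n)
    (T : List (List ℕ)) (hT : IsTableau (2 * n) T) (hsh : hasShape T nu) :
    suc T = T ↔ IsSymplectic T := by
  obtain ⟨hne, hch, hbd, hrow⟩ := hT
  cases T with
  | nil =>
      constructor
      · intro _ k hk1 hk2
        simp [IsSymplectic] at hk2
        omega
      · intro _; rfl
  | cons c rest =>
      have hcne : c ≠ [] := hne c (by simp)
      have hcch : c.Chain' (· < ·) := hch c (by simp)
      have hrev_gt : c.reverse.Chain' (· > ·) := List.isChain_reverse.mpr hcch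
      have h1 : ∀ x ∈ c.reverse, 1 ≤ x :=
        fun x hx => (hbd c (by simp) x (List.mem_reverse.mp hx)).1
      constructor
      · -- suc T = T → IsSymplectic T
        intro hfix
        by_contra hns
        simp only [IsSymplectic, not_forall] at hns
        obtain ⟨k, hk1, hk2, hk3⟩ := hns
        simp only [List.headD_cons] at hk1 hk2 hk3
        push_neg at hk3
        -- remAux c.reverse ≠ ∅
        have hnemp : remAux c.reverse ≠ ∅ := by
          intro hemp
          have := big_of_remAux_empty c.reverse hrev_gt h1 hemp (c.length - k)
            (by rw [List.length_reverse]; omega)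
          rw [List.length_reverse, getD_reverse' (by omega)] at this
          have he : c.length - 1 - (c.length - k) = k - 1 := by omega
          rw [he] at this
          have he2 : c.length - (c.length - k) = k := by omega
          rw [he2] at this
          omega
        obtain ⟨x, hx⟩ := Finset.nonempty_iff_ne_empty.mpr hnemp
        have hxc : x ∈ c := List.mem_reverse.mp (mem_of_mem_remAux _ x hx)
        have hxrem : x ∈ remSet c := hx
        have hlt : (redSeq c).length < c.length := by
          rcases Nat.lt_or_ge (redSeq c).length c.length with h | h
          · exact h
          · exfalso
            have heq : redSeq c = c := (List.filter_sublist : List.Sublist (List.filter (fun x => decide (x ∉ remSet c)) c) c).eq_of_length_le h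
            have := heq ▸ hxc
            rw [redSeq, List.mem_filter] at this
            simp at this
            exact this.2 hxrem
        have hts : tsize (suc (c :: rest)) = tsize rest + (redSeq c).length := by
          simp only [suc]
          exact tsize_insertCol _ _
        rw [hfix] at hts
        simp only [tsize, List.map_cons, List.sum_cons] at hts
        omega
      · -- IsSymplectic T → suc T = T
        intro hs
        have hsc : ∀ k, 1 ≤ k → k ≤ c.length → 2 * k - 1 ≤ c.getD (k - 1) 0 := by
          intro k hk1 hk2
          have := hs k hk1 (by simpa using hk2)
          simpa using this
        have hrevbig : ∀ j < c.reverse.length,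
            2 * (c.reverse.length - j) - 1 ≤ c.reverse.getD j 0 := by
          intro j hj
          rw [List.length_reverse] at hj ⊢
          rw [getD_reverse' hj]
          have := hsc (c.length - j) (by omega) (by omega)
          have he : c.length - j - 1 = c.length - 1 - j := by omega
          rw [he] at this
          exact this
        have hemp : remSet c = ∅ := remAux_empty_of_big c.reverse hrevbig
        have hred : redSeq c = c := by
          rw [redSeq]
          apply List.filter_eq_self.mpr
          intro a _
          simp [hemp]
        show insertCol (redSeq c) rest = c :: rest
        rw [hred]
        exact insertCol_self rest c hcne hcch
          (fun x hx => hne x (List.mem_cons_of_mem _ hx))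
          (fun x hx => hch x (List.mem_cons_of_mem _ hx)) hrow
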